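/- arXiv:math/0309352 — 2 statements merged into one kernel-verified Lean document; each statement's English description precedes it below -/
import Mathlib

section
/- Let V be a real vector space of finite dimension d ≥ 2 and let h, h' ∈ V* be linearly independent linear forms. Set W := ker h, W' := ker h', and U := W ∩ W' (a subspace of dimension d−2). Then g := h'|_W ∈ W* and g' := h|_{W'} ∈ (W')* are nonzero with kernel U, and the residue maps satisfy the anticommutation identity ψ_g ∘ ψ_h = − ψ_{g'} ∘ ψ_{h'} as linear maps Λ^d V* → Λ^{d−2} U*. -/
open Module

/-- The wedge product `h ∧ η` of a linear form `h ∈ V*` with an alternating `k`-form `η`,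
an alternating `(k+1)`-form. -/
noncomputable def wedgeOne {V : Type*} [AddCommGroup V] [Module ℝ V] {k : ℕ}
    (h : Module.Dual ℝ V) (η : V [⋀^Fin k]→ₗ[ℝ] ℝ) : V [⋀^Fin (k + 1)]→ₗ[ℝ] ℝ :=
  AlternatingMap.domDomCongr (finSumFinEquiv.trans (finCongr (Nat.add_comm 1 k)))
    ((TensorProduct.lid ℝ ℝ).toLinearMap.compAlternatingMap
      (AlternatingMap.domCoprod ((AlternatingMap.ofSubsingleton ℝ V ℝ (0 : Fin 1)) h) η))

section Aux

open Equiv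

/-- Two permutations of `Fin 1 ⊕ Fin k` agreeing at `Sum.inl 0` give the same coset. -/
lemma modSumCongr_eq_of_inl {k : ℕ} (σ τ : Equiv.Perm (Fin 1 ⊕ Fin k))
    (hστ : σ (Sum.inl 0) = τ (Sum.inl 0)) :
    (Quotient.mk'' σ : Equiv.Perm.ModSumCongr (Fin 1) (Fin k)) = Quotient.mk'' τ := by
  apply Quotient.sound'
  rw [QuotientGroup.leftRel_apply]
  have hπ0 : (σ⁻¹ * τ) (Sum.inl 0) = Sum.inl 0 := by
    simp [Equiv.Perm.mul_apply, ← hστ]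
  set π : Equiv.Perm (Fin 1 ⊕ Fin k) := σ⁻¹ * τ with hπdef
  have hπ0' : π⁻¹ (Sum.inl 0) = Sum.inl 0 := by
    rw [Equiv.Perm.inv_eq_iff_eq] at *
    exact hπ0.symm
  have hr : ∀ (ρ : Equiv.Perm (Fin 1 ⊕ Fin k)), ρ (Sum.inl 0) = Sum.inl 0 →
      ∀ j : Fin k, ∃ j', ρ (Sum.inr j) = Sum.inr j' := by
    intro ρ hρ j
    cases hj : ρ (Sum.inr j) with
    | inl i =>
      exfalso
      have hi : i = 0 := Subsingleton.elim _ _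
      rw [hi, ← hρ] at hj
      exact absurd (ρ.injective hj) (by simp)
    | inr j' => exact ⟨j', rfl⟩
  choose f hf using hr π hπ0
  choose fi hfi using hr π⁻¹ hπ0'
  have hli : Function.LeftInverse fi f := by
    intro j
    have := hfi (f j)
    rw [← hf j, Equiv.Perm.inv_def, Equiv.symm_apply_apply] at this
    exact (Sum.inr_injective this).symm
  have hri : Function.RightInverse fi f := by
    intro j
    have := hf (fi j)
    rw [← hfi j, Equiv.Perm.inv_def, Equiv.apply_symm_apply] at this
    exact (Sum.inr_injective this).symm
  refine ⟨(1, ⟨f, fi, hli, hri⟩), ?_⟩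
  ext x
  cases x with
  | inl i =>
    have hi : i = 0 := Subsingleton.elim _ _
    subst hi
    simpa using hπ0.symm
  | inr j =>
    simpa using (hf j).symm

/-- Evaluation of `wedgeOne h η` at a tuple on which `h` vanishes except possibly at `i0`. -/
lemma wedgeOne_apply_single {V : Type*} [AddCommGroup V] [Module ℝ V] {k : ℕ}
    (h : Module.Dual ℝ V) (η : V [⋀^Fin k]→ₗ[ℝ] ℝ) (v : Fin (k + 1) → V) (i0 : Fin (k + 1))
    (hv : ∀ j, j ≠ i0 → h (v j) = 0) :
    wedgeOne h η v = (-1 : ℝ) ^ (i0 : ℕ) * (h (v i0) * η (fun j => v (i0.succAbove j))) := by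
  classical
  set σe : (Fin 1 ⊕ Fin k) ≃ Fin (k + 1) := finSumFinEquiv.trans (finCongr (Nat.add_comm 1 k))
    with hσe
  have hσe0 : σe (Sum.inl 0) = 0 := by
    apply Fin.ext
    simp [hσe, finSumFinEquiv]
  have hσes : ∀ j : Fin k, σe (Sum.inr j) = Fin.succ j := by
    intro j
    apply Fin.ext
    simp [hσe, finSumFinEquiv, Nat.add_comm]
  set p : Equiv.Perm (Fin (k + 1)) := (Fin.cycleRange i0).symm with hp
  set σ0 : Equiv.Perm (Fin 1 ⊕ Fin k) := σe.symm.permCongr p with hσ0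
  have hσ0app : ∀ x, σ0 x = σe.symm (p (σe x)) := by
    intro x; simp [hσ0]
  have key : wedgeOne h η v =
      ∑ q : Equiv.Perm.ModSumCongr (Fin 1) (Fin k),
        (TensorProduct.lid ℝ ℝ) (AlternatingMap.domCoprod.summand
          ((AlternatingMap.ofSubsingleton ℝ V ℝ (0 : Fin 1)) h) η q (fun x => v (σe x))) := by
    rw [wedgeOne]
    rw [AlternatingMap.domDomCongr_apply, LinearMap.compAlternatingMap_apply,
      AlternatingMap.domCoprod_apply, MultilinearMap.sum_apply, map_sum]
    rfl
  have hzero : ∀ q : Equiv.Perm.ModSumCongr (Fin 1) (Fin k),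
      q ≠ Quotient.mk'' σ0 →
      (TensorProduct.lid ℝ ℝ) (AlternatingMap.domCoprod.summand
        ((AlternatingMap.ofSubsingleton ℝ V ℝ (0 : Fin 1)) h) η q (fun x => v (σe x))) = 0 := by
    intro q hq
    induction q using Quotient.inductionOn' with
    | h σ =>
      rw [AlternatingMap.domCoprod.summand_mk'']
      have hne : σ (Sum.inl 0) ≠ σ0 (Sum.inl 0) := by
        intro heq
        exact hq (modSumCongr_eq_of_inl σ σ0 heq)
      have : σe (σ (Sum.inl 0)) ≠ i0 := by
        intro heq
        apply hne
        apply σe.injective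
        rw [heq, hσ0app, Equiv.apply_symm_apply, hσe0, hp, Fin.cycleRange_symm_zero]
      have hz : h (v (σe (σ (Sum.inl 0)))) = 0 := hv _ this
      simp only [MultilinearMap.smul_apply, MultilinearMap.domDomCongr_apply,
        MultilinearMap.domCoprod_apply, AlternatingMap.coe_multilinearMap,
        Function.comp, AlternatingMap.ofSubsingleton_apply_apply]
      rw [hz, TensorProduct.zero_tmul, smul_zero, LinearEquiv.map_zero]
  have step : wedgeOne h η v = (TensorProduct.lid ℝ ℝ) (AlternatingMap.domCoprod.summand
      ((AlternatingMap.ofSubsingleton ℝ V ℝ (0 : Fin 1)) h) η (Quotient.mk'' σ0)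
      (fun x => v (σe x))) := by
    rw [key]
    exact Fintype.sum_eq_single _ hzero
  rw [step]
  rw [AlternatingMap.domCoprod.summand_mk'']
  have h1 : σe (σ0 (Sum.inl 0)) = i0 := by
    rw [hσ0app, Equiv.apply_symm_apply, hσe0, hp, Fin.cycleRange_symm_zero]
  have h2 : ∀ j, σe (σ0 (Sum.inr j)) = i0.succAbove j := by
    intro j
    rw [hσ0app, Equiv.apply_symm_apply, hσes, hp, Fin.cycleRange_symm_succ]
  have hsign : Equiv.Perm.sign σ0 = (-1 : ℤˣ) ^ (i0 : ℕ) := by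
    rw [hσ0, Equiv.Perm.sign_permCongr, hp]
    rw [Equiv.Perm.sign_symm]
    exact Fin.sign_cycleRange i0
  simp only [MultilinearMap.smul_apply, MultilinearMap.domDomCongr_apply,
    MultilinearMap.domCoprod_apply, AlternatingMap.coe_multilinearMap, hsign,
    Function.comp, AlternatingMap.ofSubsingleton_apply_apply]
  rw [Units.smul_def, ← Int.cast_smul_eq_zsmul ℝ, map_smul, TensorProduct.lid_tmul]
  have e1 : v (σe (σ0 (Sum.inl 0))) = v i0 := by rw [h1]
  have e2 : (fun i => v (σe (σ0 (Sum.inr i)))) = fun j => v (i0.succAbove j) := by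
    funext j; rw [h2]
  rw [e1, e2]
  simp only [smul_eq_mul]
  push_cast
  ring

/-- Naturality of `wedgeOne` with respect to precomposition with a linear map. -/
lemma wedgeOne_compLinearMap {W V : Type*} [AddCommGroup V] [Module ℝ V]
    [AddCommGroup W] [Module ℝ W] {k : ℕ}
    (h : Module.Dual ℝ V) (η : V [⋀^Fin k]→ₗ[ℝ] ℝ) (f : W →ₗ[ℝ] V) :
    (wedgeOne h η).compLinearMap f = wedgeOne (h ∘ₗ f) (η.compLinearMap f) := by
  ext v
  rw [AlternatingMap.compLinearMap_apply]
  rw [wedgeOne, wedgeOne]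
  rw [AlternatingMap.domDomCongr_apply, AlternatingMap.domDomCongr_apply,
    LinearMap.compAlternatingMap_apply, LinearMap.compAlternatingMap_apply,
    AlternatingMap.domCoprod_apply, AlternatingMap.domCoprod_apply,
    MultilinearMap.sum_apply, MultilinearMap.sum_apply, map_sum, map_sum]
  apply Finset.sum_congr rfl
  intro q _
  induction q using Quotient.inductionOn' with
  | h σ =>
    rw [AlternatingMap.domCoprod.summand_mk'', AlternatingMap.domCoprod.summand_mk'']
    simp only [MultilinearMap.smul_apply, MultilinearMap.domDomCongr_apply,
      MultilinearMap.domCoprod_apply, AlternatingMap.coe_multilinearMap,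
      AlternatingMap.ofSubsingleton_apply_apply, AlternatingMap.compLinearMap_apply,
      LinearMap.coe_comp, Function.comp]

/-- Composition of `compLinearMap`s. -/
lemma alternating_compLinearMap_comp {V W U : Type*} [AddCommGroup V] [Module ℝ V]
    [AddCommGroup W] [Module ℝ W] [AddCommGroup U] [Module ℝ U] {k : ℕ}
    (f : V [⋀^Fin k]→ₗ[ℝ] ℝ) (g : W →ₗ[ℝ] V) (g' : U →ₗ[ℝ] W) :
    (f.compLinearMap g).compLinearMap g' = f.compLinearMap (g ∘ₗ g') := by
  ext v
  simp [AlternatingMap.compLinearMap_apply]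

/-- If `h'` is not a multiple of `h`, then `h'` does not vanish on `ker h`. -/
lemma exists_ker_ne {V : Type*} [AddCommGroup V] [Module ℝ V] [FiniteDimensional ℝ V]
    (h h' : Module.Dual ℝ V) (hsp : h' ∉ Submodule.span ℝ {h}) :
    ∃ x, h x = 0 ∧ h' x ≠ 0 := by
  by_contra hcon
  push_neg at hcon
  have hle : LinearMap.ker h ≤ LinearMap.ker h' := by
    intro x hx
    exact hcon x hx
  have : h' ∈ Submodule.span ℝ (Set.range fun _ : Unit => h) := by
    apply mem_span_of_iInf_ker_le_ker (L := fun _ : Unit => h)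
    simpa [iInf_const] using hle
  rw [Set.range_const] at this
  exact hsp this

end Aux

/-- for linearly independent forms `h, h'` on a `(e+2)`-dimensional space,
with `W = ker h`, `W' = ker h'`, `U = W ∩ W'`, the restrictions `g = h'|_W`, `g' = h|_{W'}`
are nonzero with kernel `U`, and the residue maps satisfy `ψ_g ∘ ψ_h = - ψ_{g'} ∘ ψ_{h'}`
as linear maps `Λ^{e+2} V* → Λ^e U*`. -/
theorem stmt2 {V : Type*} [AddCommGroup V] [Module ℝ V] [FiniteDimensional ℝ V]
    (e : ℕ) (hdim : Module.finrank ℝ V = e + 2)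
    (h h' : Module.Dual ℝ V) (hindep : LinearIndependent ℝ ![h, h']) :
    ((LinearMap.ker h).subtype.dualMap h' ≠ 0 ∧
      Submodule.map (LinearMap.ker h).subtype
        (LinearMap.ker ((LinearMap.ker h).subtype.dualMap h')) =
        LinearMap.ker h ⊓ LinearMap.ker h') ∧
    ((LinearMap.ker h').subtype.dualMap h ≠ 0 ∧
      Submodule.map (LinearMap.ker h').subtype
        (LinearMap.ker ((LinearMap.ker h').subtype.dualMap h)) =
        LinearMap.ker h ⊓ LinearMap.ker h') ∧
    (∀ (ψh : (V [⋀^Fin (e + 2)]→ₗ[ℝ] ℝ) →ₗ[ℝ]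
          ((LinearMap.ker h) [⋀^Fin (e + 1)]→ₗ[ℝ] ℝ))
        (ψh' : (V [⋀^Fin (e + 2)]→ₗ[ℝ] ℝ) →ₗ[ℝ]
          ((LinearMap.ker h') [⋀^Fin (e + 1)]→ₗ[ℝ] ℝ))
        (ψg : ((LinearMap.ker h) [⋀^Fin (e + 1)]→ₗ[ℝ] ℝ) →ₗ[ℝ]
          ((LinearMap.ker h ⊓ LinearMap.ker h' : Submodule ℝ V) [⋀^Fin e]→ₗ[ℝ] ℝ))
        (ψg' : ((LinearMap.ker h') [⋀^Fin (e + 1)]→ₗ[ℝ] ℝ) →ₗ[ℝ]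
          ((LinearMap.ker h ⊓ LinearMap.ker h' : Submodule ℝ V) [⋀^Fin e]→ₗ[ℝ] ℝ)),
      (∀ η : V [⋀^Fin (e + 1)]→ₗ[ℝ] ℝ,
        ψh (wedgeOne h η) = η.compLinearMap (LinearMap.ker h).subtype) →
      (∀ η : V [⋀^Fin (e + 1)]→ₗ[ℝ] ℝ,
        ψh' (wedgeOne h' η) = η.compLinearMap (LinearMap.ker h').subtype) →
      (∀ η : (LinearMap.ker h) [⋀^Fin e]→ₗ[ℝ] ℝ,
        ψg (wedgeOne ((LinearMap.ker h).subtype.dualMap h') η) =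
          η.compLinearMap (Submodule.inclusion inf_le_left)) →
      (∀ η : (LinearMap.ker h') [⋀^Fin e]→ₗ[ℝ] ℝ,
        ψg' (wedgeOne ((LinearMap.ker h').subtype.dualMap h) η) =
          η.compLinearMap (Submodule.inclusion inf_le_right)) →
      ψg ∘ₗ ψh = -(ψg' ∘ₗ ψh')) := by
  classical
  -- independence consequences
  have hfin2 := linearIndependent_fin2.mp hindep
  have hh' : h' ≠ 0 := by simpa using hfin2.1
  have hsmul : ∀ a : ℝ, a • h' ≠ h := by simpa using hfin2.2
  have hsp1 : h' ∉ Submodule.span ℝ {h} := by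
    intro hmem
    rw [Submodule.mem_span_singleton] at hmem
    obtain ⟨a, ha⟩ := hmem
    rcases eq_or_ne a 0 with rfl | ha0
    · rw [zero_smul] at ha; exact hh' ha.symm
    · apply hsmul a⁻¹
      rw [← ha, smul_smul, inv_mul_cancel₀ ha0, one_smul]
  have hsp2 : h ∉ Submodule.span ℝ {h'} := by
    intro hmem
    rw [Submodule.mem_span_singleton] at hmem
    obtain ⟨a, ha⟩ := hmem
    exact hsmul a ha
  obtain ⟨x1, hx1h, hx1h'⟩ := exists_ker_ne h h' hsp1
  obtain ⟨x0, hx0h', hx0h⟩ := exists_ker_ne h' h hsp2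
  set u0 : V := (h x0)⁻¹ • x0 with hu0def
  set u1 : V := (h' x1)⁻¹ • x1 with hu1def
  have hu0h : h u0 = 1 := by simp [hu0def, inv_mul_cancel₀ hx0h]
  have hu0h' : h' u0 = 0 := by simp [hu0def, hx0h']
  have hu1h : h u1 = 0 := by simp [hu1def, hx1h]
  have hu1h' : h' u1 = 1 := by simp [hu1def, inv_mul_cancel₀ hx1h']
  -- part 1
  set W : Submodule ℝ V := LinearMap.ker h with hWdef
  set W' : Submodule ℝ V := LinearMap.ker h' with hW'def
  set g : Module.Dual ℝ W := W.subtype.dualMap h' with hgdef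
  set g' : Module.Dual ℝ W' := W'.subtype.dualMap h with hg'def
  have hg0 : g ≠ 0 := by
    intro hz
    have : g ⟨x1, hx1h⟩ = 0 := by rw [hz]; rfl
    exact hx1h' this
  have hg'0 : g' ≠ 0 := by
    intro hz
    have : g' ⟨x0, hx0h'⟩ = 0 := by rw [hz]; rfl
    exact hx0h this
  have hmap1 : Submodule.map W.subtype (LinearMap.ker g) = LinearMap.ker h ⊓ LinearMap.ker h' := by
    ext x
    constructor
    · rintro ⟨⟨y, hy⟩, hy2, rfl⟩
      exact ⟨hy, hy2⟩
    · rintro ⟨hx1, hx2⟩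
      exact ⟨⟨x, hx1⟩, hx2, rfl⟩
  have hmap2 : Submodule.map W'.subtype (LinearMap.ker g') =
      LinearMap.ker h ⊓ LinearMap.ker h' := by
    ext x
    constructor
    · rintro ⟨⟨y, hy⟩, hy2, rfl⟩
      exact ⟨hy2, hy⟩
    · rintro ⟨hx1, hx2⟩
      exact ⟨⟨x, hx2⟩, hx1, rfl⟩
  refine ⟨⟨hg0, hmap1⟩, ⟨hg'0, hmap2⟩, ?_⟩
  -- dimensions
  set U : Submodule ℝ V := LinearMap.ker h ⊓ LinearMap.ker h' with hUdef
  have hWrank : finrank ℝ W = e + 1 := by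
    have hrange : LinearMap.range h = ⊤ := by
      rw [LinearMap.range_eq_top]
      intro y
      exact ⟨y • u0, by simp [hu0h]⟩
    have hrn := LinearMap.finrank_range_add_finrank_ker h
    rw [hrange, finrank_top, finrank_self, hdim] at hrn
    rw [← hWdef] at hrn
    omega
  have hUrank : finrank ℝ U = e := by
    have hrange : LinearMap.range g = ⊤ := by
      rw [LinearMap.range_eq_top]
      intro y
      refine ⟨y • ⟨u1, hu1h⟩, ?_⟩
      have : g ⟨u1, hu1h⟩ = h' u1 := rfl
      simp [this, hu1h']
    have hrn := LinearMap.finrank_range_add_finrank_ker g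
    rw [hrange, finrank_top, finrank_self, hWrank] at hrn
    have hfm : finrank ℝ (Submodule.map W.subtype (LinearMap.ker g)) =
        finrank ℝ (LinearMap.ker g) := Submodule.finrank_map_subtype_eq W (LinearMap.ker g)
    rw [hmap1] at hfm
    rw [hUdef, hfm]
    omega
  -- basis of U and adapted basis of V
  set bU : Basis (Fin e) ℝ U := (Module.finBasis ℝ U).reindex (finCongr hUrank) with hbUdef
  set bV : Fin e → V := fun i => ((bU i : U) : V) with hbVdef
  have hbVmem : ∀ i, bV i ∈ U := fun i => (bU i).2
  have hbV_indep : LinearIndependent ℝ bV :=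
    bU.linearIndependent.map' U.subtype (Submodule.ker_subtype U)
  have hspanbV : Submodule.span ℝ (Set.range bV) ≤ U := by
    rw [Submodule.span_le]
    rintro _ ⟨i, rfl⟩
    exact hbVmem i
  have hli1 : LinearIndependent ℝ (Fin.cons u1 bV : Fin (e + 1) → V) := by
    apply hbV_indep.fin_cons
    intro hmem
    have : u1 ∈ U := hspanbV hmem
    have : h' u1 = 0 := this.2
    rw [hu1h'] at this
    exact one_ne_zero this
  have hspan1 : Submodule.span ℝ (Set.range (Fin.cons u1 bV : Fin (e + 1) → V)) ≤
      LinearMap.ker h := by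
    rw [Submodule.span_le, Fin.range_cons]
    rintro x hx
    rcases hx with rfl | ⟨i, rfl⟩
    · exact hu1h
    · exact (hbVmem _).1
  have hli : LinearIndependent ℝ (Fin.cons u0 (Fin.cons u1 bV) : Fin (e + 2) → V) := by
    apply hli1.fin_cons
    intro hmem
    have : h u0 = 0 := hspan1 hmem
    rw [hu0h] at this
    exact one_ne_zero this
  set c : Basis (Fin (e + 2)) ℝ V :=
    basisOfLinearIndependentOfCardEqFinrank hli (by simp [hdim]) with hcdef
  have hc : ⇑c = Fin.cons u0 (Fin.cons u1 bV) :=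
    coe_basisOfLinearIndependentOfCardEqFinrank hli _
  -- the auxiliary e-form
  set θ0 : V [⋀^Fin e]→ₗ[ℝ] ℝ := (c.det.curryLeft u0).curryLeft u1 with hθ0def
  have hθ0 : ∀ v : Fin e → V, θ0 v = c.det (Fin.cons u0 (Fin.cons u1 v)) := fun v => rfl
  -- values of h, h' on the basis
  have hcons_succAbove0 : ∀ (n : ℕ) (x : V) (w : Fin n → V),
      (fun j => (Fin.cons x w : Fin (n + 1) → V) ((0 : Fin (n + 1)).succAbove j)) = w := by
    intro n x w
    funext j
    rw [Fin.succAbove_zero, Fin.cons_succ]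
  have hθ0bV : θ0 bV = 1 := by
    rw [hθ0 bV, ← hc, Basis.det_self]
  -- evaluation of ω0 = h ∧ h' ∧ θ0 at the basis
  have hvan_h : ∀ j, j ≠ (0 : Fin (e + 2)) → h ((Fin.cons u0 (Fin.cons u1 bV) : Fin (e+2) → V) j) = 0 := by
    intro j hj
    refine Fin.cases (fun h0 => absurd rfl h0) (fun j' _ => ?_) j hj
    rw [Fin.cons_succ]
    refine Fin.cases ?_ (fun i => ?_) j'
    · rw [Fin.cons_zero]; exact hu1h
    · rw [Fin.cons_succ]; exact (hbVmem i).1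
  have hvan_h'_inner : ∀ j, j ≠ (0 : Fin (e + 1)) →
      h' ((Fin.cons u1 bV : Fin (e+1) → V) j) = 0 := by
    intro j hj
    refine Fin.cases (fun h0 => absurd rfl h0) (fun j' _ => ?_) j hj
    rw [Fin.cons_succ]
    exact (hbVmem j').2
  have hω0c : wedgeOne h (wedgeOne h' θ0) (Fin.cons u0 (Fin.cons u1 bV)) = 1 := by
    rw [wedgeOne_apply_single h _ _ 0 hvan_h]
    rw [hcons_succAbove0 (e + 1) u0 (Fin.cons u1 bV), Fin.cons_zero]
    rw [wedgeOne_apply_single h' _ _ 0 hvan_h'_inner]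
    rw [hcons_succAbove0 e u1 bV, Fin.cons_zero, hθ0bV, hu0h, hu1h']
    norm_num
  -- evaluation of ω1 = h' ∧ h ∧ θ0 at the basis
  have hvan_h' : ∀ j, j ≠ (1 : Fin (e + 2)) →
      h' ((Fin.cons u0 (Fin.cons u1 bV) : Fin (e+2) → V) j) = 0 := by
    intro j hj
    refine Fin.cases ?_ (fun j' hj' => ?_) j hj
    · intro _
      rw [Fin.cons_zero]; exact hu0h'
    · rw [Fin.cons_succ]
      have hj'0 : j' ≠ 0 := by
        intro h0
        apply hj'
        rw [h0, Fin.succ_zero_eq_one]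
      refine Fin.cases (fun h0 => absurd rfl h0) (fun i _ => ?_) j' hj'0
      rw [Fin.cons_succ]
      exact (hbVmem i).2
  have htuple1 : (fun j => (Fin.cons u0 (Fin.cons u1 bV) : Fin (e+2) → V)
      ((1 : Fin (e + 2)).succAbove j)) = Fin.cons u0 bV := by
    funext j
    refine Fin.cases ?_ (fun i => ?_) j
    · have : (1 : Fin (e + 2)).succAbove 0 = 0 := by
        rw [Fin.succAbove_of_castSucc_lt]
        · exact Fin.castSucc_zero
        · rw [Fin.castSucc_zero]
          exact Fin.pos_iff_ne_zero.mpr one_ne_zero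
      rw [this, Fin.cons_zero, Fin.cons_zero]
    · have : (1 : Fin (e + 2)).succAbove (Fin.succ i) = Fin.succ (Fin.succ i) := by
        rw [Fin.succAbove_of_le_castSucc]
        simp [Fin.le_def]
      rw [this, Fin.cons_succ, Fin.cons_succ, Fin.cons_succ]
  have hvan_h_inner : ∀ j, j ≠ (0 : Fin (e + 1)) →
      h ((Fin.cons u0 bV : Fin (e+1) → V) j) = 0 := by
    intro j hj
    refine Fin.cases (fun h0 => absurd rfl h0) (fun i _ => ?_) j hj
    rw [Fin.cons_succ]
    exact (hbVmem i).1
  have hω1c : wedgeOne h' (wedgeOne h θ0) (Fin.cons u0 (Fin.cons u1 bV)) = -1 := by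
    rw [wedgeOne_apply_single h' _ _ 1 hvan_h']
    rw [htuple1]
    have hc1 : (Fin.cons u0 (Fin.cons u1 bV) : Fin (e+2) → V) 1 = u1 := by
      rw [← Fin.succ_zero_eq_one, Fin.cons_succ, Fin.cons_zero]
    rw [hc1, wedgeOne_apply_single h _ _ 0 hvan_h_inner]
    rw [hcons_succAbove0 e u0 bV, Fin.cons_zero, hθ0bV, hu0h, hu1h']
    norm_num
  -- identification of the two top forms
  have hω0 : wedgeOne h (wedgeOne h' θ0) = c.det := by
    have heq := (wedgeOne h (wedgeOne h' θ0)).eq_smul_basis_det c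
    have hval : wedgeOne h (wedgeOne h' θ0) ⇑c = 1 := by rw [hc]; exact hω0c
    rw [heq, hval, one_smul]
  have hω1 : wedgeOne h' (wedgeOne h θ0) = -c.det := by
    have heq := (wedgeOne h' (wedgeOne h θ0)).eq_smul_basis_det c
    have hval : wedgeOne h' (wedgeOne h θ0) ⇑c = -1 := by rw [hc]; exact hω1c
    rw [heq, hval]
    exact neg_one_smul ℝ c.det
  have hspan : Submodule.span ℝ {c.det} = ⊤ := by
    rw [eq_top_iff]
    rintro ω -
    rw [Submodule.mem_span_singleton]
    exact ⟨ω ⇑c, (ω.eq_smul_basis_det c).symm⟩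
  -- the anticommutation identity
  intro ψh ψh' ψg ψg' hψh hψh' hψg hψg'
  apply LinearMap.ext_on hspan
  intro ω hω
  rw [Set.mem_singleton_iff] at hω
  subst hω
  have hgW : (h' ∘ₗ W.subtype) = g := rfl
  have hg'W : (h ∘ₗ W'.subtype) = g' := rfl
  have lhs_eq : ψg (ψh c.det) = θ0.compLinearMap U.subtype := by
    calc ψg (ψh c.det) = ψg (ψh (wedgeOne h (wedgeOne h' θ0))) := by rw [hω0]
      _ = ψg ((wedgeOne h' θ0).compLinearMap W.subtype) := by rw [hψh]
      _ = ψg (wedgeOne (h' ∘ₗ W.subtype) (θ0.compLinearMap W.subtype)) := by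
          rw [wedgeOne_compLinearMap]
      _ = (θ0.compLinearMap W.subtype).compLinearMap (Submodule.inclusion inf_le_left) := by
          rw [hgW]; exact hψg _
      _ = θ0.compLinearMap (W.subtype ∘ₗ Submodule.inclusion inf_le_left) :=
          alternating_compLinearMap_comp θ0 W.subtype (Submodule.inclusion inf_le_left)
      _ = θ0.compLinearMap U.subtype := by
          rw [Submodule.subtype_comp_inclusion]
  have rhs_eq : ψg' (ψh' c.det) = -(θ0.compLinearMap U.subtype) := by
    have hdet : ψh' c.det = -((wedgeOne h θ0).compLinearMap W'.subtype) := by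
      have : c.det = -(wedgeOne h' (wedgeOne h θ0)) := by rw [hω1, neg_neg]
      rw [this, map_neg, hψh']
    calc ψg' (ψh' c.det) = -(ψg' ((wedgeOne h θ0).compLinearMap W'.subtype)) := by
          rw [hdet, map_neg]
      _ = -(ψg' (wedgeOne (h ∘ₗ W'.subtype) (θ0.compLinearMap W'.subtype))) := by
          rw [wedgeOne_compLinearMap]
      _ = -((θ0.compLinearMap W'.subtype).compLinearMap (Submodule.inclusion inf_le_right)) := by
          rw [hg'W, hψg']
      _ = -(θ0.compLinearMap (W'.subtype ∘ₗ Submodule.inclusion inf_le_right)) := by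
          rw [alternating_compLinearMap_comp]
      _ = -(θ0.compLinearMap U.subtype) := by
          rw [Submodule.subtype_comp_inclusion]
  rw [LinearMap.comp_apply, LinearMap.neg_apply, LinearMap.comp_apply, lhs_eq, rhs_eq, neg_neg]
end

section
/- Let V be a real vector space of finite dimension n ≥ 1, let v ∈ V be nonzero with ℓ := span(v), let π : V → V/ℓ be the quotient map, and fix a nonzero real number c. For every hyperplane W ⊆ V with V = W ⊕ ℓ there is a unique linear form g_W ∈ V* with ker g_W = W and g_W(v) = c, and π restricts to a linear isomorphism π|_W : W → V/ℓ. Then the composed linear isomorphism Λ^n V* → Λ^{n−1} W* → Λ^{n−1} (V/ℓ)*, given by ψ_{g_W} followed by the pullback of alternating forms along (π|_W)^{−1}, is independent of the choice of the complementary hyperplane W. -/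
open Module

lemma wedgeOne_apply_eval {V : Type*} [AddCommGroup V] [Module ℝ V] {k : ℕ}
    (g : Module.Dual ℝ V) (η : V [⋀^Fin k]→ₗ[ℝ] ℝ) (x : Fin (k + 1) → V)
    (hx : ∀ j : Fin k, g (x j.succ) = 0) :
    wedgeOne g η x = g (x 0) * η (fun j => x j.succ) := by
  classical
  set σe : Fin 1 ⊕ Fin k ≃ Fin (k + 1) :=
    finSumFinEquiv.trans (finCongr (Nat.add_comm 1 k)) with hσe
  have h0 : σe (Sum.inl 0) = 0 := by
    ext; simp [σe]
  have hr : ∀ j : Fin k, σe (Sum.inr j) = j.succ := by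
    intro j; ext; simp [σe, Nat.add_comm]
  have hstep : wedgeOne g η x =
      ∑ σ : Equiv.Perm.ModSumCongr (Fin 1) (Fin k),
        (TensorProduct.lid ℝ ℝ)
          (AlternatingMap.domCoprod.summand
            ((AlternatingMap.ofSubsingleton ℝ V ℝ (0 : Fin 1)) g) η σ (fun i => x (σe i))) := by
    rw [wedgeOne]
    simp [AlternatingMap.domDomCongr_apply, AlternatingMap.domCoprod_apply,
      MultilinearMap.sum_apply, hσe]
    rfl
  rw [hstep]
  have hother : ∀ σ : Equiv.Perm.ModSumCongr (Fin 1) (Fin k),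
      σ ≠ Quotient.mk'' (1 : Equiv.Perm (Fin 1 ⊕ Fin k)) →
      (TensorProduct.lid ℝ ℝ)
        (AlternatingMap.domCoprod.summand
          ((AlternatingMap.ofSubsingleton ℝ V ℝ (0 : Fin 1)) g) η σ (fun i => x (σe i))) = 0 := by
    intro σ hσ
    induction σ using Quotient.inductionOn' with
    | h σ =>
      rw [AlternatingMap.domCoprod.summand_mk'']
      rcases h : σ (Sum.inl 0) with a0 | j
      · exfalso
        apply hσ
        have hmem : σ ∈ (Equiv.Perm.sumCongrHom (Fin 1) (Fin k)).range := by
          apply Equiv.Perm.mem_sumCongrHom_range_of_perm_mapsTo_inl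
          rintro _ ⟨a, rfl⟩
          have : a = 0 := Subsingleton.elim _ _
          subst this
          exact ⟨a0, h.symm⟩
        exact Quotient.sound' (QuotientGroup.leftRel_apply.mpr (by simpa using inv_mem hmem))
      · simp only [MultilinearMap.smul_apply, MultilinearMap.domDomCongr_apply,
          MultilinearMap.domCoprod_apply, AlternatingMap.coe_multilinearMap]
        have hz : ((AlternatingMap.ofSubsingleton ℝ V ℝ (0 : Fin 1)) g)
            (fun i => x (σe (σ (Sum.inl i)))) = 0 := by
          simp [AlternatingMap.ofSubsingleton, h, hr, hx]
        rw [hz, TensorProduct.zero_tmul, smul_zero]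
        exact LinearEquiv.map_zero _
  have h1 : ∑ σ : Equiv.Perm.ModSumCongr (Fin 1) (Fin k),
      (TensorProduct.lid ℝ ℝ)
        (AlternatingMap.domCoprod.summand
          ((AlternatingMap.ofSubsingleton ℝ V ℝ (0 : Fin 1)) g) η σ (fun i => x (σe i))) =
      (TensorProduct.lid ℝ ℝ)
        (AlternatingMap.domCoprod.summand
          ((AlternatingMap.ofSubsingleton ℝ V ℝ (0 : Fin 1)) g) η
          (Quotient.mk'' (1 : Equiv.Perm (Fin 1 ⊕ Fin k))) (fun i => x (σe i))) := by
    apply Fintype.sum_eq_single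
    exact hother
  rw [h1]
  rw [AlternatingMap.domCoprod.summand_mk'']
  simp only [map_one, one_smul, MultilinearMap.domDomCongr_apply,
      MultilinearMap.domCoprod_apply, AlternatingMap.coe_multilinearMap,
      Equiv.Perm.coe_one, Function.comp_apply, id_eq]
  rw [TensorProduct.lid_tmul]
  have h2 : (fun i : Fin k => x (σe (Sum.inr i))) = fun j => x j.succ := by
    funext j; rw [hr]
  rw [h2]
  have h3 : (((AlternatingMap.ofSubsingleton ℝ V ℝ (0 : Fin 1)) g)
      fun i : Fin 1 => x (σe (Sum.inl i))) = g (x 0) := by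
    simp [AlternatingMap.ofSubsingleton, h0]
  rw [h3, smul_eq_mul]

lemma alt_cons_congr {V : Type*} [AddCommGroup V] [Module ℝ V] {n : ℕ}
    (ω : V [⋀^Fin (n + 1)]→ₗ[ℝ] ℝ) (v : V) (x y : Fin n → V)
    (h : ∀ j, x j - y j ∈ Submodule.span ℝ {v}) :
    ω (Fin.cons v x) = ω (Fin.cons v y) := by
  classical
  have key : ∀ s : Finset (Fin n),
      ω (Fin.cons v (fun j => if j ∈ s then x j else y j)) = ω (Fin.cons v y) := by
    intro s
    induction s using Finset.induction_on with
    | empty => simp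
    | @insert j s hj ih =>
      obtain ⟨t, ht⟩ := Submodule.mem_span_singleton.mp (h j)
      have hfun : (fun i => if i ∈ insert j s then x i else y i)
          = Function.update (fun i => if i ∈ s then x i else y i) j (y j + t • v) := by
        funext i
        rcases eq_or_ne i j with rfl | hij
        · have : y i + t • v = x i := by rw [ht]; abel
          simp [hj, this]
        · simp [Function.update_of_ne hij, hij]
      rw [hfun, Fin.cons_update, AlternatingMap.map_update_add, AlternatingMap.map_update_smul]
      have hzero : ω (Function.update
          (Fin.cons v (fun i => if i ∈ s then x i else y i)) j.succ v) = 0 := by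
        apply ω.map_eq_zero_of_eq _ (i := 0) (j := j.succ)
        · rw [Function.update_of_ne (Fin.succ_ne_zero j).symm, Function.update_self, Fin.cons_zero]
        · exact (Fin.succ_ne_zero j).symm
      rw [hzero, smul_zero, add_zero, ← Fin.cons_update]
      have hupd : Function.update (fun i => if i ∈ s then x i else y i) j (y j)
          = fun i => if i ∈ s then x i else y i := by
        funext i
        rcases eq_or_ne i j with rfl | hij
        · simp [hj]
        · simp [Function.update_of_ne hij]
      rw [hupd, ih]
  have := key Finset.univ
  simpa using this

lemma wedgeOne_exists {V : Type*} [AddCommGroup V] [Module ℝ V] [FiniteDimensional ℝ V] {e : ℕ}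
    (hdim : Module.finrank ℝ V = e + 1) (v : V) (hv : v ≠ 0)
    (W : Submodule ℝ V) (hW : IsCompl W (Submodule.span ℝ {v}))
    (g : Module.Dual ℝ V) (hker : LinearMap.ker g = W) (hgv : g v ≠ 0)
    (ω : V [⋀^Fin (e + 1)]→ₗ[ℝ] ℝ) :
    ∃ η : V [⋀^Fin e]→ₗ[ℝ] ℝ, wedgeOne g η = ω := by
  have hWrank : Module.finrank ℝ W = e := by
    have h1 := Submodule.finrank_add_eq_of_isCompl hW
    rw [finrank_span_singleton hv, hdim] at h1
    omega
  let bW := Module.finBasisOfFinrankEq ℝ W hWrank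
  have hli : ∀ (t : ℝ), ∀ x ∈ W, t • v + x = 0 → t = 0 := by
    intro t x hx hsum
    have h1 := congrArg g hsum
    have hxg : g x = 0 := by rw [← LinearMap.mem_ker, hker]; exact hx
    simp only [map_add, map_smul, map_zero, smul_eq_mul, hxg, add_zero] at h1
    exact (mul_eq_zero.mp h1).resolve_right hgv
  have hsp : ∀ z : V, ∃ t : ℝ, z + t • v ∈ W := by
    intro z
    have hz : z ∈ W ⊔ Submodule.span ℝ {v} := by
      rw [hW.codisjoint.eq_top]; trivial
    obtain ⟨y, hy, m, hm, hsum⟩ := Submodule.mem_sup.mp hz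
    obtain ⟨t, ht⟩ := Submodule.mem_span_singleton.mp hm
    refine ⟨-t, ?_⟩
    have : z + (-t) • v = y := by rw [← hsum, ← ht, neg_smul]; abel
    rw [this]; exact hy
  let b := Basis.mkFinCons v bW hli hsp
  have hb : ⇑b = Fin.cons v (W.subtype ∘ bW) := Basis.coe_mkFinCons _ _ _ _
  refine ⟨(g v)⁻¹ • ω.curryLeft v, ?_⟩
  have hval : wedgeOne g ((g v)⁻¹ • ω.curryLeft v) ⇑b = ω ⇑b := by
    rw [hb, wedgeOne_apply_eval]
    · rw [Fin.cons_zero]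
      have hsucc : (fun j : Fin e => (Fin.cons v (⇑W.subtype ∘ ⇑bW) : Fin (e+1) → V) j.succ)
          = ⇑W.subtype ∘ ⇑bW := by
        funext j; rw [Fin.cons_succ]
      rw [hsucc]
      rw [AlternatingMap.smul_apply, AlternatingMap.curryLeft_apply_apply]
      rw [smul_eq_mul, ← mul_assoc, mul_inv_cancel₀ hgv, one_mul]
      rfl
    · intro j
      rw [Fin.cons_succ]
      have h2 : (⇑W.subtype ∘ ⇑bW) j ∈ LinearMap.ker g := by rw [hker]; exact (bW j).2
      exact LinearMap.mem_ker.mp h2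
  conv_lhs => rw [AlternatingMap.eq_smul_basis_det b (wedgeOne g ((g v)⁻¹ • ω.curryLeft v))]
  conv_rhs => rw [AlternatingMap.eq_smul_basis_det b ω]
  rw [hval]

lemma psi_eval {V : Type*} [AddCommGroup V] [Module ℝ V] [FiniteDimensional ℝ V] {e : ℕ}
    (hdim : Module.finrank ℝ V = e + 1) (v : V) (hv : v ≠ 0)
    (W : Submodule ℝ V) (hW : IsCompl W (Submodule.span ℝ {v}))
    (g : Module.Dual ℝ V) (hker : LinearMap.ker g = W) (hgv : g v ≠ 0)
    (ψ : (V [⋀^Fin (e + 1)]→ₗ[ℝ] ℝ) →ₗ[ℝ] (W [⋀^Fin e]→ₗ[ℝ] ℝ))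
    (hψ : ∀ η : V [⋀^Fin e]→ₗ[ℝ] ℝ, ψ (wedgeOne g η) = η.compLinearMap W.subtype)
    (ω : V [⋀^Fin (e + 1)]→ₗ[ℝ] ℝ) (w : Fin e → W) :
    (ψ ω) w = (g v)⁻¹ * ω (Fin.cons v (fun j => (w j : V))) := by
  obtain ⟨η, rfl⟩ := wedgeOne_exists hdim v hv W hW g hker hgv ω
  rw [hψ, AlternatingMap.compLinearMap_apply]
  rw [wedgeOne_apply_eval]
  · rw [Fin.cons_zero]
    have hsucc : (fun j : Fin e =>
          (Fin.cons v (fun i : Fin e => ((w i : V))) : Fin (e+1) → V) j.succ)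
        = (fun j : Fin e => (w j : V)) := by
      funext j; rw [Fin.cons_succ]
    rw [hsucc, ← mul_assoc, inv_mul_cancel₀ hgv, one_mul]
    rfl
  · intro j
    rw [Fin.cons_succ]
    have h2 : (w j : V) ∈ LinearMap.ker g := by rw [hker]; exact (w j).2
    exact LinearMap.mem_ker.mp h2

/-- for `ℓ = span v`, `π : V → V/ℓ` and a fixed nonzero `c`, each complementary
hyperplane `W` gives a unique form `g_W` with kernel `W` and `g_W(v) = c`; `π|_W` is an
isomorphism `W ≅ V/ℓ`, and the composed isomorphism
`Λ^n V* → Λ^{n-1} W* → Λ^{n-1} (V/ℓ)*` (the residue `ψ_{g_W}` followed by pullback along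
`(π|_W)⁻¹`) does not depend on `W`.  Here `n = e + 1 ≥ 1`. -/
theorem stmt3 {V : Type*} [AddCommGroup V] [Module ℝ V] [FiniteDimensional ℝ V]
    (e : ℕ) (hdim : Module.finrank ℝ V = e + 1)
    (v : V) (hv : v ≠ 0) (c : ℝ) (hc : c ≠ 0) :
    (∀ W : Submodule ℝ V, IsCompl W (Submodule.span ℝ {v}) →
      ∃! g : Module.Dual ℝ V, LinearMap.ker g = W ∧ g v = c) ∧
    (∀ W : Submodule ℝ V, IsCompl W (Submodule.span ℝ {v}) →
      Function.Bijective ((Submodule.span ℝ {v}).mkQ ∘ₗ W.subtype)) ∧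
    (∀ W₁ W₂ : Submodule ℝ V, IsCompl W₁ (Submodule.span ℝ {v}) →
        IsCompl W₂ (Submodule.span ℝ {v}) →
      ∀ g₁ g₂ : Module.Dual ℝ V,
        LinearMap.ker g₁ = W₁ → g₁ v = c → LinearMap.ker g₂ = W₂ → g₂ v = c →
      ∀ (ψ₁ : (V [⋀^Fin (e + 1)]→ₗ[ℝ] ℝ) →ₗ[ℝ] (W₁ [⋀^Fin e]→ₗ[ℝ] ℝ))
        (ψ₂ : (V [⋀^Fin (e + 1)]→ₗ[ℝ] ℝ) →ₗ[ℝ] (W₂ [⋀^Fin e]→ₗ[ℝ] ℝ)),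
        (∀ η : V [⋀^Fin e]→ₗ[ℝ] ℝ, ψ₁ (wedgeOne g₁ η) = η.compLinearMap W₁.subtype) →
        (∀ η : V [⋀^Fin e]→ₗ[ℝ] ℝ, ψ₂ (wedgeOne g₂ η) = η.compLinearMap W₂.subtype) →
      ∀ (ρ₁ : (V ⧸ Submodule.span ℝ {v}) →ₗ[ℝ] W₁)
        (ρ₂ : (V ⧸ Submodule.span ℝ {v}) →ₗ[ℝ] W₂),
        (∀ x : W₁, ρ₁ ((Submodule.span ℝ {v}).mkQ x) = x) →
        (∀ x : W₂, ρ₂ ((Submodule.span ℝ {v}).mkQ x) = x) →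
      ∀ ω : V [⋀^Fin (e + 1)]→ₗ[ℝ] ℝ,
        (ψ₁ ω).compLinearMap ρ₁ = (ψ₂ ω).compLinearMap ρ₂) := by
  have hbij : ∀ W : Submodule ℝ V, IsCompl W (Submodule.span ℝ {v}) →
      Function.Bijective ((Submodule.span ℝ {v}).mkQ ∘ₗ W.subtype) := by
    intro W hW
    have heq : ⇑((Submodule.span ℝ {v}).mkQ ∘ₗ W.subtype)
        = ⇑(Submodule.quotientEquivOfIsCompl (Submodule.span ℝ {v}) W hW.symm).symm := by
      funext x
      rfl
    rw [heq]
    exact (Submodule.quotientEquivOfIsCompl (Submodule.span ℝ {v}) W hW.symm).symm.bijective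
  refine ⟨?_, hbij, ?_⟩
  · -- Part 1
    intro W hW
    set g : Module.Dual ℝ V :=
      c • ((LinearEquiv.coord ℝ V v hv).toLinearMap ∘ₗ
        (Submodule.span ℝ {v}).linearProjOfIsCompl W hW.symm) with hg
    have hgv : g v = c := by
      have h1 : (Submodule.span ℝ {v}).linearProjOfIsCompl W hW.symm v
          = ⟨v, Submodule.mem_span_singleton_self v⟩ := by
        exact Submodule.linearProjOfIsCompl_apply_left hW.symm
          ⟨v, Submodule.mem_span_singleton_self v⟩
      simp only [hg, LinearMap.smul_apply, LinearMap.coe_comp, Function.comp_apply,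
        LinearEquiv.coe_coe, h1, LinearEquiv.coord_self, smul_eq_mul, mul_one]
    have hker : LinearMap.ker g = W := by
      ext x
      simp only [hg, LinearMap.mem_ker, LinearMap.smul_apply, LinearMap.coe_comp,
        Function.comp_apply, LinearEquiv.coe_coe, smul_eq_mul]
      rw [mul_eq_zero]
      constructor
      · rintro (h | h)
        · exact absurd h hc
        · have := (LinearEquiv.map_eq_zero_iff _).mp h
          exact (Submodule.linearProjOfIsCompl_apply_eq_zero_iff hW.symm).mp this
      · intro hx
        right
        rw [show ((Submodule.span ℝ {v}).linearProjOfIsCompl W hW.symm) x = 0 from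
          (Submodule.linearProjOfIsCompl_apply_eq_zero_iff hW.symm).mpr hx]
        exact map_zero _
    refine ⟨g, ⟨hker, hgv⟩, ?_⟩
    rintro g' ⟨hker', hgv'⟩
    ext x
    have hx : x ∈ W ⊔ Submodule.span ℝ {v} := by rw [hW.codisjoint.eq_top]; trivial
    obtain ⟨y, hy, m, hm, hsum⟩ := Submodule.mem_sup.mp hx
    obtain ⟨t, ht⟩ := Submodule.mem_span_singleton.mp hm
    have hy1 : g' y = 0 := LinearMap.mem_ker.mp (by rw [hker']; exact hy)
    have hy2 : g y = 0 := LinearMap.mem_ker.mp (by rw [hker]; exact hy)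
    rw [← hsum, ← ht, map_add, map_add, map_smul, map_smul, hy1, hy2, hgv, hgv']
  · -- Part 3
    intro W₁ W₂ hW₁ hW₂ g₁ g₂ hk₁ hv₁ hk₂ hv₂ ψ₁ ψ₂ hψ₁ hψ₂ ρ₁ ρ₂ hρ₁ hρ₂ ω
    have hg₁v : g₁ v ≠ 0 := by rw [hv₁]; exact hc
    have hg₂v : g₂ v ≠ 0 := by rw [hv₂]; exact hc
    have hsec₁ : ∀ u : V ⧸ Submodule.span ℝ {v},
        (Submodule.span ℝ {v}).mkQ (ρ₁ u) = u := by
      intro u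
      obtain ⟨x, hx⟩ := (hbij W₁ hW₁).2 u
      rw [← hx]
      have := hρ₁ x
      simp only [LinearMap.coe_comp, Function.comp_apply, Submodule.coe_subtype] at hx ⊢
      rw [show ρ₁ ((Submodule.span ℝ {v}).mkQ ↑x) = x from hρ₁ x]
    have hsec₂ : ∀ u : V ⧸ Submodule.span ℝ {v},
        (Submodule.span ℝ {v}).mkQ (ρ₂ u) = u := by
      intro u
      obtain ⟨x, hx⟩ := (hbij W₂ hW₂).2 u
      rw [← hx]
      simp only [LinearMap.coe_comp, Function.comp_apply, Submodule.coe_subtype] at hx ⊢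
      rw [show ρ₂ ((Submodule.span ℝ {v}).mkQ ↑x) = x from hρ₂ x]
    ext z
    simp only [AlternatingMap.compLinearMap_apply]
    rw [psi_eval hdim v hv W₁ hW₁ g₁ hk₁ hg₁v ψ₁ hψ₁ ω,
      psi_eval hdim v hv W₂ hW₂ g₂ hk₂ hg₂v ψ₂ hψ₂ ω, hv₁, hv₂]
    congr 1
    apply alt_cons_congr
    intro j
    rw [← Submodule.Quotient.mk_eq_zero]
    have : ((Submodule.span ℝ {v}).mkQ) ((ρ₁ (z j) : V) - (ρ₂ (z j) : V)) = 0 := by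
      rw [map_sub, hsec₁, hsec₂, sub_self]
    exact this
end
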